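/- Let U, V, W₁, W₂, Y₁, Y₂ be random variables on a common probability space taking values in finite sets. If I(W₂;Y₁|(V,W₁)) = I(W₁;Y₂|(V,W₂)), I(U;Y₁|(V,W₁)) = I(U;Y₁|W₁), and I(U;V|(W₁,W₂,Y₁)) = I(U;V|(W₁,W₂,Y₂)), then I(U;Y₁|W₁) + I(V;Y₂|W₂) ≤ I((W₁,W₂);Y₂) + I(U;Y₁|(W₁,W₂)) + I(V;Y₂|(U,W₁,W₂)). -/
import Mathlib
open MeasureTheory Real

/-- Shannon entropy (in nats) of a random variable taking values in a finite set. -/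
noncomputable def entropy {Ω : Type*} [MeasurableSpace Ω] (μ : Measure Ω)
    {S : Type*} [Fintype S] (X : Ω → S) : ℝ :=
  ∑ x : S, Real.negMulLog (μ (X ⁻¹' {x})).toReal

/-- Mutual information `I(X;Y) = H(X) + H(Y) - H(X,Y)`. -/
noncomputable def mutualInfo {Ω : Type*} [MeasurableSpace Ω] (μ : Measure Ω)
    {S T : Type*} [Fintype S] [Fintype T] (X : Ω → S) (Y : Ω → T) : ℝ :=
  entropy μ X + entropy μ Y - entropy μ (fun ω => (X ω, Y ω))

/-- Conditional mutual information `I(X;Y|Z) = H(X,Z) + H(Y,Z) - H(X,Y,Z) - H(Z)`. -/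
noncomputable def condMutualInfo {Ω : Type*} [MeasurableSpace Ω] (μ : Measure Ω)
    {S T R : Type*} [Fintype S] [Fintype T] [Fintype R]
    (X : Ω → S) (Y : Ω → T) (Z : Ω → R) : ℝ :=
  entropy μ (fun ω => (X ω, Z ω)) + entropy μ (fun ω => (Y ω, Z ω))
    - entropy μ (fun ω => (X ω, Y ω, Z ω)) - entropy μ Z



lemma gibbs_term (a q : ℝ) (ha : 0 ≤ a) (hq : 0 ≤ q) (h : a ≠ 0 → q ≠ 0) :
    a - q ≤ a * Real.log a - a * Real.log q := by
  rcases eq_or_lt_of_le ha with h0 | ha'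
  · simp [← h0]
    linarith
  · have hq' : 0 < q := lt_of_le_of_ne hq (Ne.symm (h (ne_of_gt ha')))
    have := Real.log_le_sub_one_of_pos (show 0 < q / a by positivity)
    rw [Real.log_div (ne_of_gt hq') (ne_of_gt ha')] at this
    have := mul_le_mul_of_nonneg_left this ha
    rw [mul_sub] at this
    have hqa : a * (q / a - 1) = q - a := by field_simp
    nlinarith

lemma sum_negMulLog_submodular {α β γ : Type*} [Fintype α] [Fintype β] [Fintype γ]
    (p : α × β × γ → ℝ) (hp : ∀ s, 0 ≤ p s) :
    ∑ s, negMulLog (p s) + ∑ z, negMulLog (∑ x, ∑ y, p (x, y, z))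
      ≤ ∑ s : α × γ, negMulLog (∑ y, p (s.1, y, s.2)) + ∑ s : β × γ, negMulLog (∑ x, p (x, s.1, s.2)) := by
  classical
  set pXZ : α → γ → ℝ := fun x z => ∑ y, p (x, y, z) with hpXZ
  set pYZ : β → γ → ℝ := fun y z => ∑ x, p (x, y, z) with hpYZ
  set pZ : γ → ℝ := fun z => ∑ x, ∑ y, p (x, y, z) with hpZ
  set q : α → β → γ → ℝ := fun x y z => pXZ x z * pYZ y z / pZ z with hq
  have hpXZ0 : ∀ x z, 0 ≤ pXZ x z := fun x z => Finset.sum_nonneg fun _ _ => hp _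
  have hpYZ0 : ∀ y z, 0 ≤ pYZ y z := fun y z => Finset.sum_nonneg fun _ _ => hp _
  have hpZ0 : ∀ z, 0 ≤ pZ z := fun z =>
    Finset.sum_nonneg fun _ _ => Finset.sum_nonneg fun _ _ => hp _
  have hq0 : ∀ x y z, 0 ≤ q x y z := fun x y z => by
    have := hpXZ0 x z; have := hpYZ0 y z; have := hpZ0 z; positivity
  -- rewrite goal as triple sums
  rw [Fintype.sum_prod_type (f := fun s => negMulLog (p s))]
  simp only [Fintype.sum_prod_type]
  -- key per-term inequality
  have key : ∀ x y z, p (x,y,z) - q x y z ≤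
      p (x,y,z) * Real.log (p (x,y,z)) + p (x,y,z) * Real.log (pZ z)
        - p (x,y,z) * Real.log (pXZ x z) - p (x,y,z) * Real.log (pYZ y z) := by
    intro x y z
    rcases eq_or_lt_of_le (hp (x,y,z)) with h0 | hpos
    · rw [← h0]; simp [hq0 x y z]
    · have hxz : 0 < pXZ x z :=
        lt_of_lt_of_le hpos (Finset.single_le_sum (fun i _ => hp (x, i, z)) (Finset.mem_univ y))
      have hyz : 0 < pYZ y z :=
        lt_of_lt_of_le hpos (Finset.single_le_sum (fun i _ => hp (i, y, z)) (Finset.mem_univ x))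
      have hz : 0 < pZ z :=
        lt_of_lt_of_le hxz (Finset.single_le_sum (fun i _ => hpXZ0 i z) (Finset.mem_univ x))
      have hqpos : 0 < q x y z := by
        have : q x y z = pXZ x z * pYZ y z / pZ z := rfl
        rw [this]; positivity
      have hlogq : Real.log (q x y z) = Real.log (pXZ x z) + Real.log (pYZ y z) - Real.log (pZ z) := by
        rw [hq]
        rw [Real.log_div (by positivity) (ne_of_gt hz), Real.log_mul (ne_of_gt hxz) (ne_of_gt hyz)]
      have := gibbs_term (p (x,y,z)) (q x y z) (le_of_lt hpos) (le_of_lt hqpos)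
        (fun _ => ne_of_gt hqpos)
      rw [hlogq] at this
      nlinarith [this]
  -- expansions of marginal entropies as triple sums
  have e1 : ∑ x, ∑ y, ∑ z, p (x,y,z) * Real.log (pXZ x z)
      = ∑ x, ∑ z, pXZ x z * Real.log (pXZ x z) := by
    refine Finset.sum_congr rfl fun x _ => ?_
    rw [Finset.sum_comm]
    exact Finset.sum_congr rfl fun z _ => by rw [← Finset.sum_mul]
  have e2 : ∑ x, ∑ y, ∑ z, p (x,y,z) * Real.log (pYZ y z)
      = ∑ y, ∑ z, pYZ y z * Real.log (pYZ y z) := by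
    rw [Finset.sum_comm]
    refine Finset.sum_congr rfl fun y _ => ?_
    rw [Finset.sum_comm]
    exact Finset.sum_congr rfl fun z _ => by rw [← Finset.sum_mul]
  have e3 : ∑ x, ∑ y, ∑ z, p (x,y,z) * Real.log (pZ z)
      = ∑ z, pZ z * Real.log (pZ z) := by
    have : ∀ x, ∑ y, ∑ z, p (x,y,z) * Real.log (pZ z)
        = ∑ z, ∑ y, p (x,y,z) * Real.log (pZ z) := fun x => Finset.sum_comm
    simp only [this]
    rw [Finset.sum_comm]
    refine Finset.sum_congr rfl fun z _ => ?_
    rw [Finset.sum_comm, hpZ]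
    simp only [Finset.sum_mul]
    exact Finset.sum_comm
  -- the q-sum is at most the p-sum
  have hqs : ∑ x, ∑ y, ∑ z, q x y z ≤ ∑ x, ∑ y, ∑ z, p (x,y,z) := by
    have hc : ∑ x, ∑ y, ∑ z, q x y z = ∑ z, ∑ x, ∑ y, q x y z := by
      have : ∀ x, ∑ y, ∑ z, q x y z = ∑ z, ∑ y, q x y z := fun x => Finset.sum_comm
      simp only [this]
      exact Finset.sum_comm
    have hc2 : ∑ x, ∑ y, ∑ z, p (x,y,z) = ∑ z, pZ z := by
      have : ∀ x, ∑ y, ∑ z, p (x,y,z) = ∑ z, ∑ y, p (x,y,z) := fun x => Finset.sum_comm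
      simp only [this]
      exact Finset.sum_comm
    rw [hc, hc2]
    refine Finset.sum_le_sum fun z _ => ?_
    have hyz : ∑ y, pYZ y z = pZ z := Finset.sum_comm
    have hval : ∑ x, ∑ y, q x y z = pZ z * pZ z / pZ z := by
      have : ∀ x, ∑ y, q x y z = pXZ x z * pZ z / pZ z := by
        intro x
        rw [show (∑ y, q x y z) = (∑ y, pXZ x z * pYZ y z) / pZ z from
          (Finset.sum_div _ _ _).symm, ← Finset.mul_sum, hyz]
      simp only [this]
      rw [← Finset.sum_div, ← Finset.sum_mul]
    rw [hval]
    rcases eq_or_ne (pZ z) 0 with h | h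
    · rw [h]; simp
    · rw [mul_div_assoc, div_self h, mul_one]
  -- main summed inequality
  have main : ∑ x, ∑ y, ∑ z, (p (x,y,z) - q x y z)
      ≤ ∑ x, ∑ y, ∑ z, (p (x,y,z) * Real.log (p (x,y,z)) + p (x,y,z) * Real.log (pZ z)
        - p (x,y,z) * Real.log (pXZ x z) - p (x,y,z) * Real.log (pYZ y z)) := by
    refine Finset.sum_le_sum fun x _ => Finset.sum_le_sum fun y _ => Finset.sum_le_sum fun z _ => ?_
    exact key x y z
  have hsplit : ∑ x, ∑ y, ∑ z, (p (x,y,z) * Real.log (p (x,y,z)) + p (x,y,z) * Real.log (pZ z)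
        - p (x,y,z) * Real.log (pXZ x z) - p (x,y,z) * Real.log (pYZ y z))
      = ∑ x, ∑ y, ∑ z, p (x,y,z) * Real.log (p (x,y,z))
        + ∑ z, pZ z * Real.log (pZ z)
        - ∑ x, ∑ z, pXZ x z * Real.log (pXZ x z)
        - ∑ y, ∑ z, pYZ y z * Real.log (pYZ y z) := by
    rw [← e1, ← e2, ← e3]
    simp only [← Finset.sum_add_distrib, ← Finset.sum_sub_distrib]
  have hsplit2 : ∑ x, ∑ y, ∑ z, (p (x,y,z) - q x y z)
      = ∑ x, ∑ y, ∑ z, p (x,y,z) - ∑ x, ∑ y, ∑ z, q x y z := by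
    simp only [← Finset.sum_sub_distrib]
  rw [hsplit, hsplit2] at main
  -- conclude
  have final : ∑ x, ∑ y, ∑ z, negMulLog (p (x,y,z)) + ∑ z, negMulLog (pZ z)
      ≤ ∑ x, ∑ z, negMulLog (pXZ x z) + ∑ y, ∑ z, negMulLog (pYZ y z) := by
    simp only [Real.negMulLog, neg_mul, Finset.sum_neg_distrib]
    linarith
  simpa only [hpXZ, hpYZ, hpZ] using final

lemma entropy_comp {Ω S T : Type*} [MeasurableSpace Ω] (μ : Measure Ω) [Fintype S] [Fintype T]
    (X : Ω → S) {f : S → T} (hf : Function.Injective f) :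
    entropy μ (fun ω => f (X ω)) = entropy μ X := by
  classical
  unfold entropy
  rw [← Finset.sum_subset (Finset.subset_univ (Finset.univ.image f))
    (fun t _ ht => ?_)]
  · rw [Finset.sum_image (fun a _ b _ h => hf h)]
    refine Finset.sum_congr rfl fun s _ => ?_
    have : (fun ω => f (X ω)) ⁻¹' {f s} = X ⁻¹' {s} := by
      ext ω; simp [hf.eq_iff]
    rw [this]
  · have : (fun ω => f (X ω)) ⁻¹' {t} = ∅ := by
      ext ω
      simp only [Set.mem_preimage, Set.mem_singleton_iff, Set.mem_empty_iff_false, iff_false]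
      intro h
      exact ht (Finset.mem_image.2 ⟨X ω, Finset.mem_univ _, h⟩)
    simp [this]

lemma entropy_comp_comp {Ω S A B : Type*} [MeasurableSpace Ω] (μ : Measure Ω)
    [Fintype S] [Fintype A] [Fintype B]
    (T : Ω → S) {f : S → A} {g : S → B} (hf : Function.Injective f) (hg : Function.Injective g) :
    entropy μ (fun ω => f (T ω)) = entropy μ (fun ω => g (T ω)) := by
  rw [entropy_comp μ T hf, entropy_comp μ T hg]

lemma measure_preimage_marg {Ω A B : Type*} [MeasurableSpace Ω] (μ : Measure Ω)
    [IsProbabilityMeasure μ] [Fintype B] [MeasurableSpace A] [MeasurableSpace B]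
    [MeasurableSingletonClass A] [MeasurableSingletonClass B]
    (F : Ω → A) (G : Ω → B) (hF : Measurable F) (hG : Measurable G) (a : A) :
    (μ (F ⁻¹' {a})).toReal = ∑ b : B, (μ ((fun ω => (F ω, G ω)) ⁻¹' {(a, b)})).toReal := by
  classical
  have hset : F ⁻¹' {a} = ⋃ b ∈ (Finset.univ : Finset B), (fun ω => (F ω, G ω)) ⁻¹' {(a, b)} := by
    ext ω
    simp [Prod.ext_iff]
  rw [hset, measure_biUnion_finset]
  · rw [ENNReal.toReal_sum (fun b _ => measure_ne_top μ _)]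
  · intro b _ b' _ hbb'
    refine Set.disjoint_left.2 fun ω h h' => hbb' ?_
    simp only [Set.mem_preimage, Set.mem_singleton_iff, Prod.ext_iff] at h h'
    rw [← h.2, ← h'.2]
  · intro b _
    exact (hF.prodMk hG) (MeasurableSet.singleton _)

lemma condMutualInfo_nonneg {Ω : Type*} [MeasurableSpace Ω] (μ : Measure Ω) [IsProbabilityMeasure μ]
    {S T R : Type*} [Fintype S] [Fintype T] [Fintype R]
    [MeasurableSpace S] [MeasurableSpace T] [MeasurableSpace R]
    [MeasurableSingletonClass S] [MeasurableSingletonClass T] [MeasurableSingletonClass R]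
    (X : Ω → S) (Y : Ω → T) (Z : Ω → R)
    (hX : Measurable X) (hY : Measurable Y) (hZ : Measurable Z) :
    0 ≤ condMutualInfo μ X Y Z := by
  classical
  set p : S × T × R → ℝ := fun s => (μ ((fun ω => (X ω, Y ω, Z ω)) ⁻¹' {s})).toReal with hp_def
  have hp : ∀ s, 0 ≤ p s := fun s => ENNReal.toReal_nonneg
  have hHXYZ : entropy μ (fun ω => (X ω, Y ω, Z ω)) = ∑ s, Real.negMulLog (p s) := rfl
  have hHXZ : entropy μ (fun ω => (X ω, Z ω)) = ∑ s : S × R, Real.negMulLog (∑ y, p (s.1, y, s.2)) := by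
    unfold entropy
    refine Finset.sum_congr rfl fun s _ => ?_
    rw [measure_preimage_marg μ (fun ω => (X ω, Z ω)) Y (hX.prodMk hZ) hY s]
    congr 1
    refine Finset.sum_congr rfl fun y _ => ?_
    have : (fun ω => ((X ω, Z ω), Y ω)) ⁻¹' {(s, y)}
        = (fun ω => (X ω, Y ω, Z ω)) ⁻¹' {(s.1, y, s.2)} := by
      ext ω; simp [Prod.ext_iff]; tauto
    rw [this]
  have hHYZ : entropy μ (fun ω => (Y ω, Z ω)) = ∑ s : T × R, Real.negMulLog (∑ x, p (x, s.1, s.2)) := by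
    unfold entropy
    refine Finset.sum_congr rfl fun s _ => ?_
    rw [measure_preimage_marg μ (fun ω => (Y ω, Z ω)) X (hY.prodMk hZ) hX s]
    congr 1
    refine Finset.sum_congr rfl fun x _ => ?_
    have : (fun ω => ((Y ω, Z ω), X ω)) ⁻¹' {(s, x)}
        = (fun ω => (X ω, Y ω, Z ω)) ⁻¹' {(x, s.1, s.2)} := by
      ext ω; simp [Prod.ext_iff]; tauto
    rw [this]
  have hHZ : entropy μ Z = ∑ z, Real.negMulLog (∑ x, ∑ y, p (x, y, z)) := by
    unfold entropy
    refine Finset.sum_congr rfl fun z _ => ?_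
    rw [measure_preimage_marg μ Z (fun ω => (X ω, Y ω)) hZ (hX.prodMk hY) z]
    congr 1
    rw [Fintype.sum_prod_type]
    refine Finset.sum_congr rfl fun x _ => Finset.sum_congr rfl fun y _ => ?_
    have : (fun ω => (Z ω, X ω, Y ω)) ⁻¹' {(z, x, y)}
        = (fun ω => (X ω, Y ω, Z ω)) ⁻¹' {(x, y, z)} := by
      ext ω; simp [Prod.ext_iff]; tauto
    rw [this]
  have key := sum_negMulLog_submodular p hp
  unfold condMutualInfo
  rw [hHXYZ, hHXZ, hHYZ, hHZ]
  linarith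

section IT
variable {Ω : Type*} [MeasurableSpace Ω] (μ : Measure Ω)

lemma condMutualInfo_symm {S T R : Type*} [Fintype S] [Fintype T] [Fintype R]
    (X : Ω → S) (Y : Ω → T) (Z : Ω → R) :
    condMutualInfo μ X Y Z = condMutualInfo μ Y X Z := by
  have c : entropy μ (fun ω => (X ω, Y ω, Z ω)) = entropy μ (fun ω => (Y ω, X ω, Z ω)) :=
    entropy_comp_comp μ (fun ω => (X ω, Y ω, Z ω))
      (f := id) (g := fun s => (s.2.1, s.1, s.2.2))
      Function.injective_id (by intro s t h; simp_all [Prod.ext_iff])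
  simp only [condMutualInfo]
  linarith

lemma condMutualInfo_x_comp {S S' T R : Type*} [Fintype S] [Fintype S'] [Fintype T] [Fintype R]
    (X : Ω → S) (Y : Ω → T) (Z : Ω → R) {f : S → S'} (hf : Function.Injective f) :
    condMutualInfo μ (fun ω => f (X ω)) Y Z = condMutualInfo μ X Y Z := by
  have c1 : entropy μ (fun ω => (f (X ω), Z ω)) = entropy μ (fun ω => (X ω, Z ω)) :=
    entropy_comp_comp μ (fun ω => (X ω, Z ω))
      (f := fun s => (f s.1, s.2)) (g := id)
      (by intro s t h; simp only [Prod.ext_iff] at h ⊢; exact ⟨hf h.1, h.2⟩)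
      Function.injective_id
  have c2 : entropy μ (fun ω => (f (X ω), Y ω, Z ω)) = entropy μ (fun ω => (X ω, Y ω, Z ω)) :=
    entropy_comp_comp μ (fun ω => (X ω, Y ω, Z ω))
      (f := fun s => (f s.1, s.2)) (g := id)
      (by intro s t h; simp only [Prod.ext_iff] at h ⊢; exact ⟨hf h.1, h.2⟩)
      Function.injective_id
  simp only [condMutualInfo]
  linarith

lemma condMutualInfo_z_comp {S T R R' : Type*} [Fintype S] [Fintype T] [Fintype R] [Fintype R']
    (X : Ω → S) (Y : Ω → T) (Z : Ω → R) {h : R → R'} (hh : Function.Injective h) :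
    condMutualInfo μ X Y (fun ω => h (Z ω)) = condMutualInfo μ X Y Z := by
  have c1 : entropy μ (fun ω => (X ω, h (Z ω))) = entropy μ (fun ω => (X ω, Z ω)) :=
    entropy_comp_comp μ (fun ω => (X ω, Z ω))
      (f := fun s => (s.1, h s.2)) (g := id)
      (by intro s t hst; simp only [Prod.ext_iff] at hst ⊢; exact ⟨hst.1, hh hst.2⟩)
      Function.injective_id
  have c2 : entropy μ (fun ω => (Y ω, h (Z ω))) = entropy μ (fun ω => (Y ω, Z ω)) :=
    entropy_comp_comp μ (fun ω => (Y ω, Z ω))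
      (f := fun s => (s.1, h s.2)) (g := id)
      (by intro s t hst; simp only [Prod.ext_iff] at hst ⊢; exact ⟨hst.1, hh hst.2⟩)
      Function.injective_id
  have c3 : entropy μ (fun ω => (X ω, Y ω, h (Z ω))) = entropy μ (fun ω => (X ω, Y ω, Z ω)) :=
    entropy_comp_comp μ (fun ω => (X ω, Y ω, Z ω))
      (f := fun s => (s.1, s.2.1, h s.2.2)) (g := id)
      (by intro s t hst; simp only [Prod.ext_iff] at hst ⊢; exact ⟨hst.1, hst.2.1, hh hst.2.2⟩)
      Function.injective_id
  have c4 : entropy μ (fun ω => h (Z ω)) = entropy μ Z := entropy_comp μ Z hh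
  simp only [condMutualInfo]
  linarith

lemma condMutualInfo_z_congr {S T R A B : Type*} [Fintype S] [Fintype T] [Fintype R]
    [Fintype A] [Fintype B]
    (X : Ω → S) (Y : Ω → T) (W : Ω → R) {f : R → A} {g : R → B}
    (hf : Function.Injective f) (hg : Function.Injective g) :
    condMutualInfo μ X Y (fun ω => f (W ω)) = condMutualInfo μ X Y (fun ω => g (W ω)) := by
  rw [condMutualInfo_z_comp μ X Y W hf, condMutualInfo_z_comp μ X Y W hg]

lemma condMutualInfo_chain {SA SB ST SR : Type*}
    [Fintype SA] [Fintype SB] [Fintype ST] [Fintype SR]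
    (A : Ω → SA) (B : Ω → SB) (Y : Ω → ST) (Z : Ω → SR) :
    condMutualInfo μ (fun ω => (A ω, B ω)) Y Z
      = condMutualInfo μ B Y Z + condMutualInfo μ A Y (fun ω => (B ω, Z ω)) := by
  have c1 : entropy μ (fun ω => (A ω, (B ω, Z ω))) = entropy μ (fun ω => ((A ω, B ω), Z ω)) :=
    entropy_comp_comp μ (fun ω => (A ω, B ω, Z ω))
      (f := id) (g := fun s => ((s.1, s.2.1), s.2.2))
      Function.injective_id (by intro s t h; simp_all [Prod.ext_iff])
  have c2 : entropy μ (fun ω => (Y ω, (B ω, Z ω))) = entropy μ (fun ω => (B ω, (Y ω, Z ω))) :=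
    entropy_comp_comp μ (fun ω => (B ω, Y ω, Z ω))
      (f := fun s => (s.2.1, (s.1, s.2.2))) (g := id)
      (by intro s t h; simp_all [Prod.ext_iff]) Function.injective_id
  have c3 : entropy μ (fun ω => (A ω, (Y ω, (B ω, Z ω))))
      = entropy μ (fun ω => ((A ω, B ω), (Y ω, Z ω))) :=
    entropy_comp_comp μ (fun ω => (A ω, (B ω, (Y ω, Z ω))))
      (f := fun s => (s.1, (s.2.2.1, (s.2.1, s.2.2.2))))
      (g := fun s => ((s.1, s.2.1), s.2.2))
      (by intro s t h; simp_all [Prod.ext_iff]) (by intro s t h; simp_all [Prod.ext_iff])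
  simp only [condMutualInfo]
  linarith

lemma mutualInfo_chain {SA SB ST : Type*} [Fintype SA] [Fintype SB] [Fintype ST]
    (A : Ω → SA) (B : Ω → SB) (Y : Ω → ST) :
    mutualInfo μ (fun ω => (A ω, B ω)) Y
      = mutualInfo μ B Y + condMutualInfo μ A Y B := by
  have c1 : entropy μ (fun ω => (Y ω, B ω)) = entropy μ (fun ω => (B ω, Y ω)) :=
    entropy_comp_comp μ (fun ω => (B ω, Y ω))
      (f := fun s => (s.2, s.1)) (g := id)
      (by intro s t h; simp_all [Prod.ext_iff]) Function.injective_id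
  have c2 : entropy μ (fun ω => ((A ω, B ω), Y ω)) = entropy μ (fun ω => (A ω, (Y ω, B ω))) :=
    entropy_comp_comp μ (fun ω => (A ω, (B ω, Y ω)))
      (f := fun s => ((s.1, s.2.1), s.2.2)) (g := fun s => (s.1, (s.2.2, s.2.1)))
      (by intro s t h; simp_all [Prod.ext_iff]) (by intro s t h; simp_all [Prod.ext_iff])
  simp only [mutualInfo, condMutualInfo]
  linarith

lemma mutualInfo_nonneg [IsProbabilityMeasure μ] {S T : Type*} [Fintype S] [Fintype T]
    [MeasurableSpace S] [MeasurableSpace T]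
    [MeasurableSingletonClass S] [MeasurableSingletonClass T]
    (X : Ω → S) (Y : Ω → T) (hX : Measurable X) (hY : Measurable Y) :
    0 ≤ mutualInfo μ X Y := by
  have h := condMutualInfo_nonneg μ X Y (fun _ => () : Ω → Unit) hX hY measurable_const
  have c1 : entropy μ (fun ω => (X ω, ())) = entropy μ X :=
    entropy_comp μ X (f := fun s => (s, ()))
      (by intro s t hst; simpa using hst)
  have c2 : entropy μ (fun ω => (Y ω, ())) = entropy μ Y :=
    entropy_comp μ Y (f := fun s => (s, ()))
      (by intro s t hst; simpa using hst)
  have c3 : entropy μ (fun ω => (X ω, Y ω, ())) = entropy μ (fun ω => (X ω, Y ω)) :=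
    entropy_comp μ (fun ω => (X ω, Y ω)) (f := fun s => (s.1, (s.2, ())))
      (by intro s t hst; simp_all [Prod.ext_iff])
  have c4 : entropy μ (fun _ : Ω => ()) = 0 := by
    simp [entropy]
  simp only [condMutualInfo] at h
  simp only [mutualInfo]
  linarith

end IT
set_option maxHeartbeats 1000000 in
theorem stmt_4
    {Ω : Type*} [MeasurableSpace Ω] (μ : Measure Ω) [IsProbabilityMeasure μ]
    {SU SV SW₁ SW₂ SY₁ SY₂ : Type*}
    [Fintype SU] [MeasurableSpace SU] [MeasurableSingletonClass SU] [Fintype SV] [MeasurableSpace SV] [MeasurableSingletonClass SV] [Fintype SW₁] [MeasurableSpace SW₁] [MeasurableSingletonClass SW₁] [Fintype SW₂] [MeasurableSpace SW₂] [MeasurableSingletonClass SW₂] [Fintype SY₁] [MeasurableSpace SY₁] [MeasurableSingletonClass SY₁] [Fintype SY₂] [MeasurableSpace SY₂] [MeasurableSingletonClass SY₂]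
    (U : Ω → SU) (V : Ω → SV) (W₁ : Ω → SW₁) (W₂ : Ω → SW₂) (Y₁ : Ω → SY₁) (Y₂ : Ω → SY₂)
    (hU : Measurable U) (hV : Measurable V) (hW₁ : Measurable W₁) (hW₂ : Measurable W₂) (hY₁ : Measurable Y₁) (hY₂ : Measurable Y₂)
    (h0 : condMutualInfo μ W₂ Y₁ (fun ω => (V ω, W₁ ω)) = condMutualInfo μ W₁ Y₂ (fun ω => (V ω, W₂ ω)))
    (h1 : condMutualInfo μ U Y₁ (fun ω => (V ω, W₁ ω)) = condMutualInfo μ U Y₁ W₁)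
    (h2 : condMutualInfo μ U V (fun ω => (W₁ ω, W₂ ω, Y₁ ω)) = condMutualInfo μ U V (fun ω => (W₁ ω, W₂ ω, Y₂ ω)))
    : condMutualInfo μ U Y₁ W₁ + condMutualInfo μ V Y₂ W₂ ≤ mutualInfo μ (fun ω => (W₁ ω, W₂ ω)) Y₂ + condMutualInfo μ U Y₁ (fun ω => (W₁ ω, W₂ ω)) + condMutualInfo μ V Y₂ (fun ω => (U ω, W₁ ω, W₂ ω)) := by
  -- step A : bound I(U;Y₁|V,W₁)
  have s2 : condMutualInfo μ (fun ω => (U ω, W₂ ω)) Y₁ (fun ω => (V ω, W₁ ω))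
      = condMutualInfo μ W₂ Y₁ (fun ω => (V ω, W₁ ω))
        + condMutualInfo μ U Y₁ (fun ω => (W₂ ω, (V ω, W₁ ω))) :=
    condMutualInfo_chain μ U W₂ Y₁ (fun ω => (V ω, W₁ ω))
  have s3 : condMutualInfo μ (fun ω => (W₂ ω, U ω)) Y₁ (fun ω => (V ω, W₁ ω))
      = condMutualInfo μ U Y₁ (fun ω => (V ω, W₁ ω))
        + condMutualInfo μ W₂ Y₁ (fun ω => (U ω, (V ω, W₁ ω))) :=
    condMutualInfo_chain μ W₂ U Y₁ (fun ω => (V ω, W₁ ω))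
  have s4 : condMutualInfo μ (fun ω => (U ω, W₂ ω)) Y₁ (fun ω => (V ω, W₁ ω))
      = condMutualInfo μ (fun ω => (W₂ ω, U ω)) Y₁ (fun ω => (V ω, W₁ ω)) :=
    condMutualInfo_x_comp μ (fun ω => (W₂ ω, U ω)) Y₁ (fun ω => (V ω, W₁ ω)) (f := fun s => (s.2, s.1)) (fun s t h => by simp_all [Prod.ext_iff])
  have s5 : 0 ≤ condMutualInfo μ W₂ Y₁ (fun ω => (U ω, (V ω, W₁ ω))) :=
    condMutualInfo_nonneg μ W₂ Y₁ (fun ω => (U ω, (V ω, W₁ ω))) hW₂ hY₁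
      (hU.prodMk (hV.prodMk hW₁))
  have s6 : condMutualInfo μ U Y₁ (fun ω => (W₂ ω, (V ω, W₁ ω)))
      = condMutualInfo μ U Y₁ (fun ω => (V ω, (W₁ ω, W₂ ω))) :=
    condMutualInfo_z_congr μ U Y₁ (fun ω => (V ω, W₁ ω, W₂ ω))
      (f := fun s => (s.2.2, (s.1, s.2.1))) (g := id) (fun s t h => by simp_all [Prod.ext_iff]) Function.injective_id
  -- step B : expand I(V,W₁;Y₂|W₂) two ways
  have s7 : condMutualInfo μ (fun ω => (W₁ ω, V ω)) Y₂ W₂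
      = condMutualInfo μ V Y₂ W₂ + condMutualInfo μ W₁ Y₂ (fun ω => (V ω, W₂ ω)) :=
    condMutualInfo_chain μ W₁ V Y₂ W₂
  have s8 : condMutualInfo μ (fun ω => (V ω, W₁ ω)) Y₂ W₂
      = condMutualInfo μ W₁ Y₂ W₂ + condMutualInfo μ V Y₂ (fun ω => (W₁ ω, W₂ ω)) :=
    condMutualInfo_chain μ V W₁ Y₂ W₂
  have s9 : condMutualInfo μ (fun ω => (W₁ ω, V ω)) Y₂ W₂
      = condMutualInfo μ (fun ω => (V ω, W₁ ω)) Y₂ W₂ :=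
    condMutualInfo_x_comp μ (fun ω => (V ω, W₁ ω)) Y₂ W₂ (f := fun s => (s.2, s.1)) (fun s t h => by simp_all [Prod.ext_iff])
  -- step C : I(W₁;Y₂|W₂) ≤ I(W₁,W₂;Y₂)
  have s10 : mutualInfo μ (fun ω => (W₁ ω, W₂ ω)) Y₂
      = mutualInfo μ W₂ Y₂ + condMutualInfo μ W₁ Y₂ W₂ :=
    mutualInfo_chain μ W₁ W₂ Y₂
  have s11 : 0 ≤ mutualInfo μ W₂ Y₂ := mutualInfo_nonneg μ W₂ Y₂ hW₂ hY₂
  -- step D : the two Kolmogorov identities at Z = (W₁,W₂)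
  have a1 : condMutualInfo μ (fun ω => (Y₁ ω, V ω)) U (fun ω => (W₁ ω, W₂ ω))
      = condMutualInfo μ V U (fun ω => (W₁ ω, W₂ ω))
        + condMutualInfo μ Y₁ U (fun ω => (V ω, (W₁ ω, W₂ ω))) :=
    condMutualInfo_chain μ Y₁ V U (fun ω => (W₁ ω, W₂ ω))
  have a2 : condMutualInfo μ (fun ω => (V ω, Y₁ ω)) U (fun ω => (W₁ ω, W₂ ω))
      = condMutualInfo μ Y₁ U (fun ω => (W₁ ω, W₂ ω))
        + condMutualInfo μ V U (fun ω => (Y₁ ω, (W₁ ω, W₂ ω))) :=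
    condMutualInfo_chain μ V Y₁ U (fun ω => (W₁ ω, W₂ ω))
  have a3 : condMutualInfo μ (fun ω => (Y₁ ω, V ω)) U (fun ω => (W₁ ω, W₂ ω))
      = condMutualInfo μ (fun ω => (V ω, Y₁ ω)) U (fun ω => (W₁ ω, W₂ ω)) :=
    condMutualInfo_x_comp μ (fun ω => (V ω, Y₁ ω)) U (fun ω => (W₁ ω, W₂ ω)) (f := fun s => (s.2, s.1)) (fun s t h => by simp_all [Prod.ext_iff])
  have a4 : condMutualInfo μ (fun ω => (Y₂ ω, U ω)) V (fun ω => (W₁ ω, W₂ ω))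
      = condMutualInfo μ U V (fun ω => (W₁ ω, W₂ ω))
        + condMutualInfo μ Y₂ V (fun ω => (U ω, (W₁ ω, W₂ ω))) :=
    condMutualInfo_chain μ Y₂ U V (fun ω => (W₁ ω, W₂ ω))
  have a5 : condMutualInfo μ (fun ω => (U ω, Y₂ ω)) V (fun ω => (W₁ ω, W₂ ω))
      = condMutualInfo μ Y₂ V (fun ω => (W₁ ω, W₂ ω))
        + condMutualInfo μ U V (fun ω => (Y₂ ω, (W₁ ω, W₂ ω))) :=
    condMutualInfo_chain μ U Y₂ V (fun ω => (W₁ ω, W₂ ω))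
  have a6 : condMutualInfo μ (fun ω => (Y₂ ω, U ω)) V (fun ω => (W₁ ω, W₂ ω))
      = condMutualInfo μ (fun ω => (U ω, Y₂ ω)) V (fun ω => (W₁ ω, W₂ ω)) :=
    condMutualInfo_x_comp μ (fun ω => (U ω, Y₂ ω)) V (fun ω => (W₁ ω, W₂ ω)) (f := fun s => (s.2, s.1)) (fun s t h => by simp_all [Prod.ext_iff])
  -- symmetry conversions
  have b1 : condMutualInfo μ V U (fun ω => (W₁ ω, W₂ ω))
      = condMutualInfo μ U V (fun ω => (W₁ ω, W₂ ω)) :=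
    condMutualInfo_symm μ V U (fun ω => (W₁ ω, W₂ ω))
  have b2 : condMutualInfo μ Y₁ U (fun ω => (V ω, (W₁ ω, W₂ ω)))
      = condMutualInfo μ U Y₁ (fun ω => (V ω, (W₁ ω, W₂ ω))) :=
    condMutualInfo_symm μ Y₁ U (fun ω => (V ω, (W₁ ω, W₂ ω)))
  have b3 : condMutualInfo μ Y₁ U (fun ω => (W₁ ω, W₂ ω))
      = condMutualInfo μ U Y₁ (fun ω => (W₁ ω, W₂ ω)) :=
    condMutualInfo_symm μ Y₁ U (fun ω => (W₁ ω, W₂ ω))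
  have b4 : condMutualInfo μ V U (fun ω => (Y₁ ω, (W₁ ω, W₂ ω)))
      = condMutualInfo μ U V (fun ω => (Y₁ ω, (W₁ ω, W₂ ω))) :=
    condMutualInfo_symm μ V U (fun ω => (Y₁ ω, (W₁ ω, W₂ ω)))
  have b5 : condMutualInfo μ Y₂ V (fun ω => (U ω, (W₁ ω, W₂ ω)))
      = condMutualInfo μ V Y₂ (fun ω => (U ω, (W₁ ω, W₂ ω))) :=
    condMutualInfo_symm μ Y₂ V (fun ω => (U ω, (W₁ ω, W₂ ω)))
  have b6 : condMutualInfo μ Y₂ V (fun ω => (W₁ ω, W₂ ω))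
      = condMutualInfo μ V Y₂ (fun ω => (W₁ ω, W₂ ω)) :=
    condMutualInfo_symm μ Y₂ V (fun ω => (W₁ ω, W₂ ω))
  -- relabel h2
  have c1 : condMutualInfo μ U V (fun ω => (Y₁ ω, (W₁ ω, W₂ ω)))
      = condMutualInfo μ U V (fun ω => (W₁ ω, (W₂ ω, Y₁ ω))) :=
    condMutualInfo_z_congr μ U V (fun ω => (W₁ ω, W₂ ω, Y₁ ω))
      (f := fun s => (s.2.2, (s.1, s.2.1))) (g := id) (fun s t h => by simp_all [Prod.ext_iff]) Function.injective_id
  have c2 : condMutualInfo μ U V (fun ω => (Y₂ ω, (W₁ ω, W₂ ω)))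
      = condMutualInfo μ U V (fun ω => (W₁ ω, (W₂ ω, Y₂ ω))) :=
    condMutualInfo_z_congr μ U V (fun ω => (W₁ ω, W₂ ω, Y₂ ω))
      (f := fun s => (s.2.2, (s.1, s.2.1))) (g := id) (fun s t h => by simp_all [Prod.ext_iff]) Function.injective_id
  linarith
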